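/- Let K be a field of characteristic zero or characteristic p with m ≤ p-1, m ≥ 5. No nontrivial solution (x₁,...,x_m) of the system x₁^k + ... + x_m^k = 0 (1 ≤ k ≤ m-2) has two distinct indices i₁ ≠ i₂ with x_{i₁} = x_{i₂} together with a third index i₃ (distinct from i₁, i₂) with x_{i₃} = 0. -/

import Mathlib

open Polynomial Finset

/-- No nontrivial solution of the power-sum system of degrees 1..m-2 has two
distinct indices with equal coordinates together with a third index at which
the coordinate vanishes. -/
theorem stmt5 {K : Type*} [Field K] (p m : ℕ) (hm : 5 ≤ m)
    (hchar : CharP K 0 ∨ (p.Prime ∧ 0 < p ∧ CharP K p ∧ m ≤ p - 1))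
    (x : Fin m → K) (hx : x ≠ 0)
    (hsol : ∀ k : ℕ, 1 ≤ k → k ≤ m - 2 → ∑ i, x i ^ k = 0) :
    ¬ ∃ i₁ i₂ i₃ : Fin m, i₁ ≠ i₂ ∧ i₁ ≠ i₃ ∧ i₂ ≠ i₃ ∧
      x i₁ = x i₂ ∧ x i₃ = 0 := by
  rintro ⟨i₁, i₂, i₃, h12, h13, h23, heq, h3⟩
  classical
  -- natural number casts are nonzero up to m-1
  have hnat : ∀ k : ℕ, 1 ≤ k → k ≤ m - 1 → (k : K) ≠ 0 := by
    intro k hk1 hk2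
    rcases hchar with h0 | ⟨hp, hppos, hcp, hmp⟩
    · haveI := h0
      haveI : CharZero K := CharP.charP_to_charZero K
      exact Nat.cast_ne_zero.2 (by omega)
    · haveI := hcp
      rw [Ne, CharP.cast_eq_zero_iff K p]
      intro hdvd
      have := Nat.le_of_dvd (by omega) hdvd
      omega
  set s : Multiset K := Finset.univ.val.map x with hs
  have hcard : Multiset.card s = m := by simp [hs]
  -- power sums under aeval
  have hpsum : ∀ k : ℕ, MvPolynomial.aeval x (MvPolynomial.psum (Fin m) K k) = ∑ i, x i ^ k := by
    intro k
    simp [MvPolynomial.psum]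
  have hesymmA : ∀ j : ℕ, MvPolynomial.aeval x (MvPolynomial.esymm (Fin m) K j) = s.esymm j := by
    intro j
    rw [hs]
    exact MvPolynomial.aeval_esymm_eq_multiset_esymm (Fin m) K j x
  -- elementary symmetric functions vanish in degrees 1..m-2
  have hE : ∀ j : ℕ, 1 ≤ j → j ≤ m - 2 → s.esymm j = 0 := by
    intro j hj1 hj2
    have newton := congrArg (MvPolynomial.aeval x) (MvPolynomial.mul_esymm_eq_sum (Fin m) K j)
    rw [map_mul, map_mul, map_sum, map_natCast, hesymmA] at newton
    have hsum : ∑ a ∈ (Finset.HasAntidiagonal.antidiagonal j).filter (fun a => a.1 < j),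
        MvPolynomial.aeval x ((-1 : MvPolynomial (Fin m) K) ^ a.1 *
          MvPolynomial.esymm (Fin m) K a.1 * MvPolynomial.psum (Fin m) K a.2) = 0 := by
      apply Finset.sum_eq_zero
      intro a ha
      simp only [Finset.mem_filter, Finset.HasAntidiagonal.mem_antidiagonal] at ha
      rw [map_mul, hpsum, hsol a.2 (by omega) (by omega), mul_zero]
    rw [hsum, mul_zero] at newton
    exact (mul_eq_zero.mp newton).resolve_left (hnat j hj1 (by omega))
  -- the top elementary symmetric function vanishes
  have hEm : s.esymm m = 0 := by
    rw [hs, Finset.esymm_map_val]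
    have huniv : (Finset.univ : Finset (Fin m)).powersetCard m = {Finset.univ} := by
      have := Finset.powersetCard_self (Finset.univ : Finset (Fin m))
      simpa using this
    rw [huniv, Finset.sum_singleton]
    exact Finset.prod_eq_zero (Finset.mem_univ i₃) h3
  -- the polynomial with the xᵢ as roots
  set P : K[X] := (s.map fun t => X - C t).prod with hPdef
  have hPfin : P = ∏ i, (X - C (x i)) := by
    rw [hPdef, hs, Multiset.map_map]
    rfl
  set a : K := P.coeff 1 with ha
  have hesymm0 : s.esymm 0 = 1 := by
    simp [Multiset.esymm]
  have hP : P = X ^ m + C a * X := by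
    ext n
    rw [coeff_add, coeff_X_pow, coeff_C_mul, coeff_X]
    by_cases hn1 : n = 1
    · subst hn1
      rw [if_neg (by omega : ¬ (1 = m)), if_pos rfl, zero_add, mul_one]
    · rw [if_neg (show ¬ (1 = n) from fun h => hn1 h.symm), mul_zero, add_zero]
      rcases lt_or_ge m n with hn | hn
      · rw [Polynomial.coeff_eq_zero_of_natDegree_lt, if_neg (by omega : ¬ (n = m))]
        rw [hPdef, Polynomial.natDegree_multiset_prod_X_sub_C_eq_card, hcard]
        exact hn
      · have hcoeff := Multiset.prod_X_sub_C_coeff s (k := n) (by rw [hcard]; exact hn)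
        rw [hcard, ← hPdef] at hcoeff
        rw [hcoeff]
        by_cases hnm : n = m
        · subst hnm
          simp [Nat.sub_self, hesymm0]
        · have hEz : s.esymm (m - n) = 0 := by
            rcases Nat.eq_zero_or_pos n with h0 | hpos
            · subst h0; simpa using hEm
            · exact hE (m - n) (by omega) (by omega)
          rw [hEz, mul_zero, if_neg hnm]
  have heval : ∀ c : K, P.eval c = c ^ m + a * c := by
    intro c
    rw [hP]
    simp
  have hder : ∀ c : K, P.derivative.eval c = (m : K) * c ^ (m - 1) + a := by
    intro c
    rw [hP]
    simp [derivative_X_pow]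
  -- double root at c := x i₁
  set c : K := x i₁ with hc
  obtain ⟨Q, hQ⟩ : (X - C c) * (X - C c) ∣ P := by
    rw [hPfin, ← Finset.mul_prod_erase _ _ (Finset.mem_univ i₁),
      ← Finset.mul_prod_erase _ _ (Finset.mem_erase.mpr ⟨h12.symm, Finset.mem_univ i₂⟩),
      ← heq, ← mul_assoc]
    exact dvd_mul_right _ _
  have hfc : (X - C c).eval c = 0 := by simp
  have hD0 : P.derivative.eval c = 0 := by
    rw [hQ, derivative_mul, derivative_mul]
    simp [hfc]
  have hP0 : P.eval c = 0 := by
    rw [hQ]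
    simp [hfc]
  have h1 : (m : K) * c ^ (m - 1) + a = 0 := by rw [← hder c]; exact hD0
  have h2 : c ^ m + a * c = 0 := by rw [← heval c]; exact hP0
  -- deduce a = 0
  have hm1K : ((m : K) - 1) ≠ 0 := by
    intro h
    have : ((m - 1 : ℕ) : K) = 0 := by
      rw [Nat.cast_sub (by omega)]
      simpa using h
    exact hnat (m - 1) (by omega) le_rfl this
  have ha0 : a = 0 := by
    by_cases hc0 : c = 0
    · rw [hc0, zero_pow (by omega : m - 1 ≠ 0), mul_zero, zero_add] at h1
      exact h1
    · have hcm : c ^ m = c ^ (m - 1) * c := by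
        rw [← pow_succ]
        congr 1
        omega
      rw [hcm] at h2
      have h2' : (c ^ (m - 1) + a) * c = 0 := by linear_combination h2
      have h3' : c ^ (m - 1) = -a := by
        have h4 := (mul_eq_zero.mp h2').resolve_right hc0
        linear_combination h4
      rw [h3'] at h1
      have hkey : a * (1 - (m : K)) = 0 := by linear_combination h1
      have ha' : a = 0 := by
        rcases mul_eq_zero.mp hkey with h | h
        · exact h
        · exact absurd (by linear_combination -h : (m : K) - 1 = 0) hm1K
      -- then c = 0, contradiction
      rw [ha', neg_zero] at h3'
      exact absurd (pow_eq_zero_iff (by omega : m - 1 ≠ 0) |>.mp h3') hc0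
  -- conclude all coordinates vanish
  apply hx
  funext i
  have hPi : P.eval (x i) = 0 := by
    rw [hPfin, eval_prod]
    exact Finset.prod_eq_zero (Finset.mem_univ i) (by simp)
  rw [heval, ha0, zero_mul, add_zero] at hPi
  simpa using pow_eq_zero_iff (by omega : m ≠ 0) |>.mp hPi
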